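/- Let f realize access structure A on {s}∪P with f({i})=f({s}) for all i ∈ P, and let a ∈ A' ⊆ A ⊆ P. If A∖{a} ∈ A, A' ∈ A, and A'∖{a} ∉ A, then f(A) = f(A∖{a}). -/
import Mathlib


/-- The polymatroid rank function `f` on ground set `{s} ∪ P` realizes the access
structure `𝒜 ⊆ 2^P`. -/
def Realizes {α : Type*} [DecidableEq α] (s : α) (P : Finset α) (𝒜 : Set (Finset α))
    (f : Finset α → ℝ) : Prop :=
  ∀ A : Finset α, A ⊆ P →
    (A ∈ 𝒜 ↔ f (insert s A) = f A) ∧ (A ∉ 𝒜 ↔ f (insert s A) = f A + f {s})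

/-- Lemma 2: if `A ∖ {a}` and `A'` are qualified while `A' ∖ {a}` is not, then
removing `a` from `A` does not change the rank. -/
theorem rank_unchanged {α : Type*} [DecidableEq α] (s : α) (P : Finset α)
    (hs : s ∉ P) (𝒜 : Set (Finset α)) (f : Finset α → ℝ)
    (hempty : f ∅ = 0)
    (hnonneg : ∀ A, A ⊆ insert s P → 0 ≤ f A)
    (hmono : ∀ A B : Finset α, A ⊆ B → B ⊆ insert s P → f A ≤ f B)
    (hsub : ∀ A B : Finset α, A ⊆ insert s P → B ⊆ insert s P →
        f (A ∪ B) + f (A ∩ B) ≤ f A + f B)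
    (hreal : Realizes s P 𝒜 f)
    (hideal : ∀ i ∈ P, f {i} = f {s})
    (A A' : Finset α) (hA : A ⊆ P) (hA' : A' ⊆ A) (a : α) (ha : a ∈ A')
    (h1 : A \ {a} ∈ 𝒜) (h2 : A' ∈ 𝒜) (h3 : A' \ {a} ∉ 𝒜) :
    f A = f (A \ {a}) := by
  have haP : a ∈ P := hA (hA' ha)
  have hA'P : A' ⊆ P := hA'.trans hA
  have hAdP : A \ {a} ⊆ P := (Finset.sdiff_subset).trans hA
  have hA'dP : A' \ {a} ⊆ P := (Finset.sdiff_subset).trans hA'P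
  have hAsub : A ⊆ insert s P := hA.trans (Finset.subset_insert _ _)
  -- realization facts
  have e1 : f (insert s (A \ {a})) = f (A \ {a}) := ((hreal _ hAdP).1).mp h1
  have e2 : f (insert s A') = f A' := ((hreal _ hA'P).1).mp h2
  have e3 : f (insert s (A' \ {a})) = f (A' \ {a}) + f {s} :=
    ((hreal _ hA'dP).2).mp h3
  have hfa : f {a} = f {s} := hideal a haP
  -- submodularity 1: f A' ≤ f (A'\{a}) + f {a}
  have u1 : (A' \ {a}) ∪ {a} = A' := by
    ext x
    simp only [Finset.mem_union, Finset.mem_sdiff, Finset.mem_singleton]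
    by_cases hxa : x = a
    · subst hxa; simp [ha]
    · tauto
  have i1 : (A' \ {a}) ∩ {a} = (∅ : Finset α) := by
    ext x
    simp only [Finset.mem_inter, Finset.mem_sdiff, Finset.mem_singleton,
      Finset.notMem_empty]
    tauto
  have s1 : f A' + f ∅ ≤ f (A' \ {a}) + f {a} := by
    have := hsub (A' \ {a}) {a} (hA'dP.trans (Finset.subset_insert _ _))
      (by simp [Finset.singleton_subset_iff, Finset.mem_insert, haP])
    rwa [u1, i1] at this
  -- submodularity 2
  have u2 : insert s (A \ {a}) ∪ insert s A' = insert s A := by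
    ext x
    simp only [Finset.mem_union, Finset.mem_insert, Finset.mem_sdiff,
      Finset.mem_singleton]
    have hx' := @hA' x
    by_cases hxa : x = a
    · subst hxa; simp [ha, hA' ha]
    · tauto
  have i2 : insert s (A \ {a}) ∩ insert s A' = insert s (A' \ {a}) := by
    ext x
    simp only [Finset.mem_inter, Finset.mem_insert, Finset.mem_sdiff,
      Finset.mem_singleton]
    have hx' := @hA' x
    tauto
  have s2 : f (insert s A) + f (insert s (A' \ {a})) ≤
      f (insert s (A \ {a})) + f (insert s A') := by
    have := hsub (insert s (A \ {a})) (insert s A')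
      (Finset.insert_subset_insert _ hAdP) (Finset.insert_subset_insert _ hA'P)
    rwa [u2, i2] at this
  -- monotonicity
  have m1 : f A ≤ f (insert s A) :=
    hmono A (insert s A) (Finset.subset_insert _ _) (Finset.insert_subset_insert _ hA)
  have m2 : f (A \ {a}) ≤ f A := hmono _ _ Finset.sdiff_subset hAsub
  linarith
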